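/- Let $\Omega$ be a real symmetric $4 \times 4$ matrix with $\omega_{12} = \omega_{13} = \omega_{14} = \omega_{23} = \omega_{24} = 0$ (so its only possibly nonzero off-diagonal entries are $\omega_{34} = \omega_{43}$), and let $\Lambda$ be the $4 \times 4$ real matrix whose only possibly nonzero entries are $\lambda_{12}, \lambda_{13}, \lambda_{23}, \lambda_{34}$ (in positions $(1,2), (1,3), (2,3), (3,4)$). Then $\mathrm{Id} - \Lambda$ is invertible, and the matrix $\Sigma = (\mathrm{Id} - \Lambda)^{-T}\, \Omega\, (\mathrm{Id} - \Lambda)^{-1}$ satisfies $\det \Sigma_{\{1,2\},\{3,4\}} = \sigma_{13}\sigma_{24} - \sigma_{14}\sigma_{23} = 0$. -/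

import Mathlib

open Matrix

set_option maxHeartbeats 1600000 in
/-- for the linear structural equation model of the mixed graph
with directed edges `1→2, 1→3, 2→3, 3→4` and bidirected edge `3↔4`,
`Id - Λ` is invertible and the covariance matrix
`Σ = (Id - Λ)⁻ᵀ Ω (Id - Λ)⁻¹` satisfies
`det Σ_{{1,2},{3,4}} = σ₁₃σ₂₄ - σ₁₄σ₂₃ = 0` (trek separation). -/
theorem trek_separation_fourCycle_example (Om La : Matrix (Fin 4) (Fin 4) ℝ)
    (hOmSymm : Om.IsSymm)
    (hOm12 : Om 0 1 = 0) (hOm13 : Om 0 2 = 0) (hOm14 : Om 0 3 = 0)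
    (hOm23 : Om 1 2 = 0) (hOm24 : Om 1 3 = 0)
    (hLa : ∀ i j : Fin 4,
      ¬((i = 0 ∧ j = 1) ∨ (i = 0 ∧ j = 2) ∨ (i = 1 ∧ j = 2) ∨ (i = 2 ∧ j = 3)) →
      La i j = 0) :
    IsUnit (1 - La) ∧
    ∀ S : Matrix (Fin 4) (Fin 4) ℝ, S = ((1 - La)⁻¹)ᵀ * Om * (1 - La)⁻¹ →
      S 0 2 * S 1 3 - S 0 3 * S 1 2 = 0 := by
  set a := La 0 1 with ha
  set b := La 0 2 with hb
  set c := La 1 2 with hc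
  set d := La 2 3 with hd
  have hOm21 : Om 1 0 = 0 := by rw [← hOmSymm.apply]; exact hOm12
  have hOm31 : Om 2 0 = 0 := by rw [← hOmSymm.apply]; exact hOm13
  have hOm41 : Om 3 0 = 0 := by rw [← hOmSymm.apply]; exact hOm14
  have hOm32 : Om 2 1 = 0 := by rw [← hOmSymm.apply]; exact hOm23
  have hOm42 : Om 3 1 = 0 := by rw [← hOmSymm.apply]; exact hOm24
  have hM : (1 : Matrix (Fin 4) (Fin 4) ℝ) - La =
      !![1, -a, -b, 0; 0, 1, -c, 0; 0, 0, 1, -d; 0, 0, 0, 1] := by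
    ext i j
    fin_cases i <;> fin_cases j <;>
      simp [Matrix.sub_apply, Matrix.one_apply, Matrix.vecHead, Matrix.vecTail, ha, hb, hc, hd] <;>
      first
        | exact hLa 0 0 (by decide)
        | exact hLa 0 3 (by decide)
        | exact hLa 1 0 (by decide)
        | exact hLa 1 1 (by decide)
        | exact hLa 1 3 (by decide)
        | exact hLa 2 0 (by decide)
        | exact hLa 2 1 (by decide)
        | exact hLa 2 2 (by decide)
        | exact hLa 3 0 (by decide)
        | exact hLa 3 1 (by decide)
        | exact hLa 3 2 (by decide)
        | exact hLa 3 3 (by decide)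
  set N : Matrix (Fin 4) (Fin 4) ℝ :=
    !![1, a, b + a*c, (b + a*c)*d; 0, 1, c, c*d; 0, 0, 1, d; 0, 0, 0, 1] with hN
  have hMN : (1 - La) * N = 1 := by
    rw [hM]
    ext i j
    fin_cases i <;> fin_cases j <;>
      simp [hN, Matrix.mul_apply, Fin.sum_univ_four, Matrix.one_apply, Matrix.vecHead, Matrix.vecTail] <;> ring
  have hdet : (1 - La).det * N.det = 1 := by
    rw [← Matrix.det_mul, hMN, Matrix.det_one]
  have hUnit : IsUnit (1 - La) := by
    rw [Matrix.isUnit_iff_isUnit_det]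
    exact IsUnit.of_mul_eq_one _ hdet
  refine ⟨hUnit, ?_⟩
  intro S hS
  have hinv : (1 - La)⁻¹ = N := inv_eq_right_inv hMN
  subst hS
  rw [hinv]
  simp [Matrix.mul_apply, Fin.sum_univ_four, hN, Matrix.vecHead, Matrix.vecTail,
    hOm12, hOm13, hOm14, hOm23, hOm24, hOm21, hOm31, hOm41, hOm32, hOm42]
  ring
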